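/- The weighted symmetrization Ψ_r(P) = Σ_{σ∈S_r} σ( ∏_{i<j} g(x_i/x_j) · P ), applied to Laurent polynomials, satisfies Ψ_{r+s}(P(x_1,…,x_r)Q(x_{r+1},…,x_{r+s})) = Ψ_r(P) ⋆ Ψ_s(Q), where ⋆ is the shuffle product associated to g. -/

import Mathlib

open Finset

/-- The set of `(r,s)`-shuffles in `S_{r+s}`. -/
def Sh (r s : ℕ) : Finset (Equiv.Perm (Fin (r + s))) :=
  Finset.univ.filter fun w =>
    (∀ i j : Fin r, i < j → w (Fin.castAdd s i) < w (Fin.castAdd s j)) ∧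
    (∀ i j : Fin s, i < j → w (Fin.natAdd r i) < w (Fin.natAdd r j))

/-- The shuffle product associated to `g`. -/
noncomputable def shuffleMul (g : ℂ → ℂ) {r s : ℕ}
    (P : (Fin r → ℂ) → ℂ) (Q : (Fin s → ℂ) → ℂ) : (Fin (r + s) → ℂ) → ℂ :=
  fun x => ∑ w ∈ Sh r s,
    (∏ i : Fin r, ∏ j : Fin s,
        g (x (w (Fin.castAdd s i)) / x (w (Fin.natAdd r j)))) *
      P (fun i => x (w (Fin.castAdd s i))) * Q (fun j => x (w (Fin.natAdd r j)))

/-- The weighted symmetrization `Ψ_r(P) = Σ_{σ ∈ S_r} σ(∏_{i<j} g(x_i/x_j) · P)`. -/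
noncomputable def Psi (g : ℂ → ℂ) {r : ℕ} (P : (Fin r → ℂ) → ℂ) :
    (Fin r → ℂ) → ℂ :=
  fun x => ∑ σ : Equiv.Perm (Fin r),
    (∏ p ∈ Finset.univ.filter (fun p : Fin r × Fin r => p.1 < p.2),
        g (x (σ p.1) / x (σ p.2))) * P (x ∘ σ)

set_option maxRecDepth 10000

section Aux
variable {r s : ℕ}

def blockPerm (σ : Equiv.Perm (Fin r)) (τ : Equiv.Perm (Fin s)) : Equiv.Perm (Fin (r + s)) :=
  finSumFinEquiv.symm.trans ((Equiv.sumCongr σ τ).trans finSumFinEquiv)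

@[simp] lemma blockPerm_castAdd (σ : Equiv.Perm (Fin r)) (τ : Equiv.Perm (Fin s)) (i : Fin r) :
    blockPerm σ τ (Fin.castAdd s i) = Fin.castAdd s (σ i) := by
  simp [blockPerm]

@[simp] lemma blockPerm_natAdd (σ : Equiv.Perm (Fin r)) (τ : Equiv.Perm (Fin s)) (j : Fin s) :
    blockPerm σ τ (Fin.natAdd r j) = Fin.natAdd r (τ j) := by
  simp only [blockPerm, Equiv.trans_apply, finSumFinEquiv_symm_apply_natAdd,
    Equiv.sumCongr_apply, Sum.map_inr, finSumFinEquiv_apply_right]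

lemma castAdd_lt_castAdd {i j : Fin r} : (Fin.castAdd s i) < Fin.castAdd s j ↔ i < j := by
  simp only [Fin.lt_def, Fin.coe_castAdd]

lemma castAdd_lt_natAdd (i : Fin r) (j : Fin s) : Fin.castAdd s i < Fin.natAdd r j := by
  have := i.isLt
  simp only [Fin.lt_def, Fin.coe_castAdd, Fin.coe_natAdd]
  omega

lemma not_natAdd_lt_castAdd (j : Fin s) (i : Fin r) : ¬ Fin.natAdd r j < Fin.castAdd s i := by
  have := i.isLt
  simp only [Fin.lt_def, Fin.coe_castAdd, Fin.coe_natAdd, not_lt]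
  omega

lemma natAdd_lt_natAdd {i j : Fin s} : (Fin.natAdd r i) < Fin.natAdd r j ↔ i < j := by
  simp only [Fin.lt_def, Fin.coe_natAdd]
  omega

lemma prod_split (f : Fin (r + s) → ℂ) :
    ∏ a : Fin (r + s), f a =
      (∏ i : Fin r, f (Fin.castAdd s i)) * ∏ j : Fin s, f (Fin.natAdd r j) := by
  rw [← finSumFinEquiv.prod_comp f]
  simp [Fintype.prod_sum_type]

lemma weight_split (F : Fin (r + s) → Fin (r + s) → ℂ) :
    ∏ p ∈ univ.filter (fun p : Fin (r + s) × Fin (r + s) => p.1 < p.2), F p.1 p.2 =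
      (∏ p ∈ univ.filter (fun p : Fin r × Fin r => p.1 < p.2),
          F (Fin.castAdd s p.1) (Fin.castAdd s p.2)) *
        (∏ p ∈ univ.filter (fun p : Fin s × Fin s => p.1 < p.2),
          F (Fin.natAdd r p.1) (Fin.natAdd r p.2)) *
        ∏ i : Fin r, ∏ j : Fin s, F (Fin.castAdd s i) (Fin.natAdd r j) := by
  rw [prod_filter, prod_filter, prod_filter, Fintype.prod_prod_type, Fintype.prod_prod_type,
    Fintype.prod_prod_type]
  rw [prod_split (fun a => ∏ b, if a < b then F a b else 1)]
  have h1 : ∀ a : Fin (r + s), (∏ b, if a < b then F a b else 1) =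
      (∏ i : Fin r, if a < Fin.castAdd s i then F a (Fin.castAdd s i) else 1) *
        ∏ j : Fin s, if a < Fin.natAdd r j then F a (Fin.natAdd r j) else 1 :=
    fun a => prod_split _
  simp only [h1]
  rw [prod_mul_distrib, prod_mul_distrib]
  have h2 : ∀ i : Fin r, ∀ j : Fin s,
      (if Fin.castAdd s i < Fin.natAdd r j then F (Fin.castAdd s i) (Fin.natAdd r j) else 1)
        = F (Fin.castAdd s i) (Fin.natAdd r j) := fun i j => if_pos (castAdd_lt_natAdd i j)
  have h3 : ∀ j : Fin s, ∀ i : Fin r,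
      (if Fin.natAdd r j < Fin.castAdd s i then F (Fin.natAdd r j) (Fin.castAdd s i) else 1)
        = 1 := fun j i => if_neg (not_natAdd_lt_castAdd j i)
  simp only [h2, h3, prod_const_one, mul_one, castAdd_lt_castAdd, natAdd_lt_natAdd]
  ring

lemma image_comp_perm {n : ℕ} {β : Type*} [DecidableEq β] (f : Fin n → β)
    (σ : Equiv.Perm (Fin n)) :
    univ.image (fun i => f (σ i)) = univ.image f := by
  ext y
  simp only [mem_image, mem_univ, true_and]
  exact ⟨fun ⟨i, h⟩ => ⟨σ i, h⟩, fun ⟨i, h⟩ => ⟨σ.symm i, by simpa using h⟩⟩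

lemma strictMono_eq_of_image_eq {n m : ℕ} {f h : Fin n → Fin m} (hf : StrictMono f)
    (hh : StrictMono h) (heq : univ.image f = univ.image h) : f = h := by
  have hc : (univ.image f).card = n := by
    rw [card_image_of_injective _ hf.injective, card_univ, Fintype.card_fin]
  have e1 := Finset.orderEmbOfFin_unique hc (fun x => mem_image_of_mem _ (mem_univ x)) hf
  have e2 := Finset.orderEmbOfFin_unique hc
    (fun x => by rw [heq]; exact mem_image_of_mem _ (mem_univ x)) hh
  funext x
  exact (congrFun e1 x).trans (congrFun e2 x).symm

lemma shuffle_strictMono_cast {w : Equiv.Perm (Fin (r + s))} (hw : w ∈ Sh r s) :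
    StrictMono (fun i : Fin r => w (Fin.castAdd s i)) := by
  intro i j hij
  exact (mem_filter.mp hw).2.1 i j hij

lemma shuffle_strictMono_nat {w : Equiv.Perm (Fin (r + s))} (hw : w ∈ Sh r s) :
    StrictMono (fun j : Fin s => w (Fin.natAdd r j)) := by
  intro i j hij
  exact (mem_filter.mp hw).2.2 i j hij

lemma castAdd_injective' : Function.Injective (fun i : Fin r => Fin.castAdd s i) := by
  intro a b h
  have := congrArg Fin.val h
  simpa [Fin.ext_iff] using this

lemma natAdd_injective' : Function.Injective (fun j : Fin s => Fin.natAdd r j) := by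
  intro a b h
  have := congrArg Fin.val h
  simp only [Fin.coe_natAdd] at this
  exact Fin.ext (by omega)

lemma exists_decomp (π : Equiv.Perm (Fin (r + s))) :
    ∃ w ∈ Sh r s, ∃ σ : Equiv.Perm (Fin r), ∃ τ : Equiv.Perm (Fin s),
      π = w * blockPerm σ τ := by
  classical
  set A : Finset (Fin (r + s)) := univ.image (fun i : Fin r => π (Fin.castAdd s i)) with hAdef
  have hinj1 : Function.Injective (fun i : Fin r => π (Fin.castAdd s i)) :=
    fun a b h => castAdd_injective' (π.injective h)
  have hA : A.card = r := by
    rw [hAdef, card_image_of_injective _ hinj1, card_univ, Fintype.card_fin]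
  have hAc : Aᶜ.card = s := by
    rw [card_compl, hA, Fintype.card_fin]
    omega
  have hmemA : ∀ i : Fin r, π (Fin.castAdd s i) ∈ A := fun i => by
    rw [hAdef]; exact mem_image_of_mem _ (mem_univ i)
  have hmemAc : ∀ j : Fin s, π (Fin.natAdd r j) ∈ Aᶜ := by
    intro j
    rw [mem_compl, hAdef]
    simp only [mem_image, mem_univ, true_and, not_exists]
    intro i h
    have := π.injective h
    have := congrArg Fin.val this
    simp only [Fin.coe_castAdd, Fin.coe_natAdd] at this
    have := j.isLt
    have := i.isLt
    omega
  let eA : Fin r ≃o {y // y ∈ A} := A.orderIsoOfFin hA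
  let eB : Fin s ≃o {y // y ∈ Aᶜ} := Aᶜ.orderIsoOfFin hAc
  let eB' : Fin s ≃ {y // y ∉ A} :=
    eB.toEquiv.trans (Equiv.subtypeEquivRight (fun y => Finset.mem_compl))
  let w : Equiv.Perm (Fin (r + s)) :=
    finSumFinEquiv.symm.trans ((Equiv.sumCongr eA.toEquiv eB').trans
      (Equiv.sumCompl (fun y => y ∈ A)))
  have hwc : ∀ i : Fin r, w (Fin.castAdd s i) = (eA i : Fin (r + s)) := by
    intro i
    simp [w, Equiv.sumCompl]
  have hwn : ∀ j : Fin s, w (Fin.natAdd r j) = ((eB j : Fin (r + s))) := by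
    intro j
    simp [w, eB', Equiv.sumCompl, Equiv.subtypeEquivRight]
    rfl
  have hwSh : w ∈ Sh r s := by
    rw [Sh, mem_filter]
    refine ⟨mem_univ _, fun i j hij => ?_, fun i j hij => ?_⟩
    · rw [hwc, hwc]
      exact Subtype.coe_lt_coe.mpr (eA.strictMono hij)
    · rw [hwn, hwn]
      exact Subtype.coe_lt_coe.mpr (eB.strictMono hij)
  let fσ : Fin r → Fin r := fun i => eA.toEquiv.symm ⟨π (Fin.castAdd s i), hmemA i⟩
  have hfσ : Function.Injective fσ := by
    intro a b h
    apply hinj1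
    have := congrArg (fun z => (eA.toEquiv z : Fin (r + s))) h
    simpa [fσ] using this
  let σ : Equiv.Perm (Fin r) := Equiv.ofBijective fσ (Finite.injective_iff_bijective.mp hfσ)
  let fτ : Fin s → Fin s := fun j => eB.toEquiv.symm ⟨π (Fin.natAdd r j), hmemAc j⟩
  have hinj2 : Function.Injective (fun j : Fin s => π (Fin.natAdd r j)) :=
    fun a b h => natAdd_injective' (π.injective h)
  have hfτ : Function.Injective fτ := by
    intro a b h
    apply hinj2
    have := congrArg (fun z => (eB.toEquiv z : Fin (r + s))) h
    simpa [fτ] using this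
  let τ : Equiv.Perm (Fin s) := Equiv.ofBijective fτ (Finite.injective_iff_bijective.mp hfτ)
  refine ⟨w, hwSh, σ, τ, ?_⟩
  apply Equiv.ext
  intro p
  refine Fin.addCases (fun i => ?_) (fun j => ?_) p
  · rw [Equiv.Perm.mul_apply, blockPerm_castAdd, hwc]
    show π (Fin.castAdd s i) = (eA (fσ i) : Fin (r + s))
    simp [fσ]
  · rw [Equiv.Perm.mul_apply, blockPerm_natAdd, hwn]
    show π (Fin.natAdd r j) = (eB (fτ j) : Fin (r + s))
    simp [fτ]

lemma decomp_inj {w1 w2 : Equiv.Perm (Fin (r + s))} (h1 : w1 ∈ Sh r s) (h2 : w2 ∈ Sh r s)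
    {σ1 σ2 : Equiv.Perm (Fin r)} {τ1 τ2 : Equiv.Perm (Fin s)}
    (h : w1 * blockPerm σ1 τ1 = w2 * blockPerm σ2 τ2) :
    w1 = w2 ∧ σ1 = σ2 ∧ τ1 = τ2 := by
  classical
  have hc : ∀ i : Fin r, w1 (Fin.castAdd s (σ1 i)) = w2 (Fin.castAdd s (σ2 i)) := by
    intro i
    have := congrArg (fun π : Equiv.Perm (Fin (r + s)) => π (Fin.castAdd s i)) h
    simpa [Equiv.Perm.mul_apply] using this
  have hn : ∀ j : Fin s, w1 (Fin.natAdd r (τ1 j)) = w2 (Fin.natAdd r (τ2 j)) := by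
    intro j
    have := congrArg (fun π : Equiv.Perm (Fin (r + s)) => π (Fin.natAdd r j)) h
    simpa [Equiv.Perm.mul_apply] using this
  have himc : univ.image (fun i : Fin r => w1 (Fin.castAdd s i)) =
      univ.image (fun i : Fin r => w2 (Fin.castAdd s i)) := by
    rw [← image_comp_perm (fun i : Fin r => w1 (Fin.castAdd s i)) σ1,
      ← image_comp_perm (fun i : Fin r => w2 (Fin.castAdd s i)) σ2]
    exact Finset.image_congr (fun i _ => hc i)
  have hwc : (fun i : Fin r => w1 (Fin.castAdd s i)) = fun i => w2 (Fin.castAdd s i) :=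
    strictMono_eq_of_image_eq (shuffle_strictMono_cast h1) (shuffle_strictMono_cast h2) himc
  have himn : univ.image (fun j : Fin s => w1 (Fin.natAdd r j)) =
      univ.image (fun j : Fin s => w2 (Fin.natAdd r j)) := by
    rw [← image_comp_perm (fun j : Fin s => w1 (Fin.natAdd r j)) τ1,
      ← image_comp_perm (fun j : Fin s => w2 (Fin.natAdd r j)) τ2]
    exact Finset.image_congr (fun j _ => hn j)
  have hwn : (fun j : Fin s => w1 (Fin.natAdd r j)) = fun j => w2 (Fin.natAdd r j) :=
    strictMono_eq_of_image_eq (shuffle_strictMono_nat h1) (shuffle_strictMono_nat h2) himn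
  have hw : w1 = w2 := by
    apply Equiv.ext
    intro p
    refine Fin.addCases (fun i => ?_) (fun j => ?_) p
    · exact congrFun hwc i
    · exact congrFun hwn j
  subst hw
  refine ⟨rfl, ?_, ?_⟩
  · apply Equiv.ext
    intro i
    exact castAdd_injective' (w1.injective (hc i))
  · apply Equiv.ext
    intro j
    exact natAdd_injective' (w1.injective (hn j))

lemma sum_decomp (f : Equiv.Perm (Fin (r + s)) → ℂ) :
    ∑ π : Equiv.Perm (Fin (r + s)), f π =
      ∑ w ∈ Sh r s, ∑ σ : Equiv.Perm (Fin r), ∑ τ : Equiv.Perm (Fin s),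
        f (w * blockPerm σ τ) := by
  classical
  have key : ∑ q ∈ (Sh r s) ×ˢ ((univ : Finset (Equiv.Perm (Fin r))) ×ˢ
      (univ : Finset (Equiv.Perm (Fin s)))), f (q.1 * blockPerm q.2.1 q.2.2) =
      ∑ π ∈ (univ : Finset (Equiv.Perm (Fin (r + s)))), f π := by
    refine Finset.sum_bij (fun q _ => q.1 * blockPerm q.2.1 q.2.2) (fun q _ => mem_univ _)
      ?_ ?_ (fun q _ => rfl)
    · rintro ⟨w1, σ1, τ1⟩ hq1 ⟨w2, σ2, τ2⟩ hq2 h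
      simp only [mem_product] at hq1 hq2
      obtain ⟨hw, hσ, hτ⟩ := decomp_inj hq1.1 hq2.1 h
      simp only [Prod.mk.injEq]
      exact ⟨hw, hσ, hτ⟩
    · intro π _
      obtain ⟨w, hw, σ, τ, hπ⟩ := exists_decomp π
      exact ⟨⟨w, σ, τ⟩, mem_product.mpr ⟨hw, mem_product.mpr ⟨mem_univ _, mem_univ _⟩⟩, hπ.symm⟩
  rw [← key, Finset.sum_product]
  simp only [Finset.sum_product]

end Aux

/-- **Compatibility of weighted symmetrization with the shuffle product**:
`Ψ_{r+s}(P(x_1,…,x_r) Q(x_{r+1},…,x_{r+s})) = Ψ_r(P) ⋆ Ψ_s(Q)`. -/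
theorem stmt3 (g : ℂ → ℂ) (r s : ℕ)
    (P : (Fin r → ℂ) → ℂ) (Q : (Fin s → ℂ) → ℂ) (x : Fin (r + s) → ℂ) :
    Psi g (fun y : Fin (r + s) → ℂ =>
        P (fun i => y (Fin.castAdd s i)) * Q (fun j => y (Fin.natAdd r j))) x =
      shuffleMul g (Psi g P) (Psi g Q) x := by
  classical
  unfold Psi shuffleMul
  rw [sum_decomp]
  refine Finset.sum_congr rfl fun w hw => ?_
  rw [mul_assoc, Finset.sum_mul_sum, Finset.mul_sum]
  simp only [Finset.mul_sum]
  refine Finset.sum_congr rfl fun σ _ => Finset.sum_congr rfl fun τ _ => ?_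
  simp only [Function.comp_def, Equiv.Perm.mul_apply, blockPerm_castAdd, blockPerm_natAdd]
  rw [weight_split (fun a b => g (x (w (blockPerm σ τ a)) / x (w (blockPerm σ τ b))))]
  simp only [blockPerm_castAdd, blockPerm_natAdd]
  have hcross : (∏ i : Fin r, ∏ j : Fin s,
      g (x (w (Fin.castAdd s (σ i))) / x (w (Fin.natAdd r (τ j))))) =
      ∏ i : Fin r, ∏ j : Fin s, g (x (w (Fin.castAdd s i)) / x (w (Fin.natAdd r j))) := by
    rw [← Equiv.prod_comp σ (fun i => ∏ j : Fin s, g (x (w (Fin.castAdd s i)) / x (w (Fin.natAdd r j))))]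
    exact Finset.prod_congr rfl fun i _ =>
      Equiv.prod_comp τ (fun j => g (x (w (Fin.castAdd s (σ i))) / x (w (Fin.natAdd r j))))
  rw [hcross]
  ring
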